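/- arXiv:2202.04739 — 2 statements merged into one kernel-verified Lean document; each statement's English description precedes it below -/
import Mathlib

section
/- The deconcatenation coproduct Δ_decon is an algebra homomorphism with respect to the generalised quasi-shuffle product: for all u, v ∈ ℚ⟨Z⟩, Δ_decon(u ⋆ v) = Δ_decon(u) (⋆⊗⋆) Δ_decon(v). -/
/-- Noncommutative polynomials ℚ⟨Z⟩, as finitely supported functions on words. -/
abbrev QW (Z : Type*) := List Z →₀ ℚ

/-- Prepend a letter to every word of a polynomial: `a·p`. -/
noncomputable def pre {Z : Type*} (a : Z) (p : QW Z) : QW Z :=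
  Finsupp.mapDomain (a :: ·) p

/-- `Lw D c w` is `L_c(w)`: for `w = x t`, it is `(c ◊ x) t`, and `L_c(1) = 0`. -/
noncomputable def Lw {Z : Type*} (D : (Z →₀ ℚ) →ₗ[ℚ] (Z →₀ ℚ) →ₗ[ℚ] (Z →₀ ℚ))
    (c : Z →₀ ℚ) : List Z → QW Z
  | [] => 0
  | x :: t => (D c (Finsupp.single x 1)).sum fun b r => Finsupp.single (b :: t) r

/-- Linear extension of `L_c` to ℚ⟨Z⟩. -/
noncomputable def Lmap {Z : Type*} (D : (Z →₀ ℚ) →ₗ[ℚ] (Z →₀ ℚ) →ₗ[ℚ] (Z →₀ ℚ))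
    (c : Z →₀ ℚ) (p : QW Z) : QW Z :=
  p.sum fun w r => r • Lw D c w

/-- The generalised quasi-shuffle product of two words:
`(au) ⋆ (bv) = a(u ⋆ bv) + b(au ⋆ v) − L_{a◊b}(u ⋆ v)`. -/
noncomputable def star {Z : Type*} (D : (Z →₀ ℚ) →ₗ[ℚ] (Z →₀ ℚ) →ₗ[ℚ] (Z →₀ ℚ)) :
    List Z → List Z → QW Z
  | [], v => Finsupp.single v 1
  | u, [] => Finsupp.single u 1
  | a :: u, b :: v =>
      pre a (star D u (b :: v)) + pre b (star D (a :: u) v)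
        - Lmap D (D (Finsupp.single a 1) (Finsupp.single b 1)) (star D u v)
  termination_by u v => u.length + v.length

/-- Bilinear extension of `star` to ℚ⟨Z⟩. -/
noncomputable def starP {Z : Type*} (D : (Z →₀ ℚ) →ₗ[ℚ] (Z →₀ ℚ) →ₗ[ℚ] (Z →₀ ℚ))
    (p q : QW Z) : QW Z :=
  p.sum fun u r => q.sum fun v s => (r * s) • star D u v

/- STATEMENT 8: the deconcatenation coproduct is an algebra homomorphism for the
generalised quasi-shuffle product: Δ(u ⋆ v) = Δ(u) (⋆⊗⋆) Δ(v). The tensor product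
ℚ⟨Z⟩ ⊗ ℚ⟨Z⟩ is modelled as finitely supported functions on pairs of words. -/

/-- Deconcatenation coproduct of a word. -/
noncomputable def deconW {Z : Type*} (w : List Z) : (List Z × List Z) →₀ ℚ :=
  ∑ k ∈ Finset.range (w.length + 1), Finsupp.single (w.take k, w.drop k) 1

/-- Linear extension of the deconcatenation coproduct. -/
noncomputable def decon {Z : Type*} (p : QW Z) : (List Z × List Z) →₀ ℚ :=
  p.sum fun w r => r • deconW w

/-- Elementary tensor of two polynomials. -/
noncomputable def tens {Z : Type*} (p q : QW Z) : (List Z × List Z) →₀ ℚ :=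
  p.sum fun u r => q.sum fun v s => Finsupp.single (u, v) (r * s)

/-- The componentwise product (⋆⊗⋆) on ℚ⟨Z⟩ ⊗ ℚ⟨Z⟩:
`(u₁⊗v₁)(u₂⊗v₂) = (u₁⋆u₂)⊗(v₁⋆v₂)`. -/
noncomputable def tensStar {Z : Type*} (D : (Z →₀ ℚ) →ₗ[ℚ] (Z →₀ ℚ) →ₗ[ℚ] (Z →₀ ℚ))
    (P Q : (List Z × List Z) →₀ ℚ) : (List Z × List Z) →₀ ℚ :=
  P.sum fun x r => Q.sum fun y s => (r * s) • tens (star D x.1 y.1) (star D x.2 y.2)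

/-! ### Auxiliary development -/

section Aux

variable {Z : Type*} (D : (Z →₀ ℚ) →ₗ[ℚ] (Z →₀ ℚ) →ₗ[ℚ] (Z →₀ ℚ))

/-- Generic bilinear extension of a function on indices. -/
noncomputable def bilin {α : Type*} {M : Type*} [AddCommMonoid M] [Module ℚ M]
    (f : α → α → M) : (α →₀ ℚ) →ₗ[ℚ] (α →₀ ℚ) →ₗ[ℚ] M :=
  Finsupp.lsum ℚ fun x => LinearMap.toSpanSingleton ℚ _
    (Finsupp.lsum ℚ fun y => LinearMap.toSpanSingleton ℚ M (f x y))

lemma bilin_apply {α : Type*} {M : Type*} [AddCommMonoid M] [Module ℚ M]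
    (f : α → α → M) (p q : α →₀ ℚ) :
    bilin f p q = p.sum fun x r => q.sum fun y s => (r * s) • f x y := by
  rw [bilin, Finsupp.lsum_apply, LinearMap.finsupp_sum_apply]
  simp only [LinearMap.toSpanSingleton_apply, LinearMap.smul_apply, Finsupp.lsum_apply,
    Finsupp.smul_sum, smul_smul]

lemma bilin_single_single {α : Type*} {M : Type*} [AddCommMonoid M] [Module ℚ M]
    (f : α → α → M) (x y : α) (r s : ℚ) :
    bilin f (Finsupp.single x r) (Finsupp.single y s) = (r * s) • f x y := by
  rw [bilin, Finsupp.lsum_single, LinearMap.toSpanSingleton_apply, LinearMap.smul_apply,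
    Finsupp.lsum_single, LinearMap.toSpanSingleton_apply, smul_smul]

/-- linear version of `decon`. -/
noncomputable def deconL : QW Z →ₗ[ℚ] ((List Z × List Z) →₀ ℚ) :=
  Finsupp.lsum ℚ fun w => LinearMap.toSpanSingleton ℚ _ (deconW w)

lemma decon_eq (p : QW Z) : decon p = deconL p := rfl

/-- linear version of `Lmap`. -/
noncomputable def LmapL (c : Z →₀ ℚ) : QW Z →ₗ[ℚ] QW Z :=
  Finsupp.lsum ℚ fun w => LinearMap.toSpanSingleton ℚ _ (Lw D c w)

lemma Lmap_eq (c : Z →₀ ℚ) (p : QW Z) : Lmap D c p = LmapL D c p := rfl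

/-- linear version of `pre`. -/
noncomputable def preL (a : Z) : QW Z →ₗ[ℚ] QW Z :=
  Finsupp.lmapDomain ℚ ℚ (a :: ·)

lemma pre_eq (a : Z) (p : QW Z) : pre a p = preL a p := rfl

/-- `tens` as a bilinear map. -/
noncomputable def tensB : QW Z →ₗ[ℚ] QW Z →ₗ[ℚ] ((List Z × List Z) →₀ ℚ) :=
  bilin fun u v => Finsupp.single (u, v) 1

lemma tens_eq (p q : QW Z) : tens p q = tensB p q := by
  rw [tens, tensB, bilin_apply]
  simp only [Finsupp.smul_single', mul_one]

/-- `tensStar` as a bilinear map. -/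
noncomputable def TS : ((List Z × List Z) →₀ ℚ) →ₗ[ℚ] ((List Z × List Z) →₀ ℚ) →ₗ[ℚ]
    ((List Z × List Z) →₀ ℚ) :=
  bilin fun x y => tens (star D x.1 y.1) (star D x.2 y.2)

lemma tensStar_eq (P Q : (List Z × List Z) →₀ ℚ) : tensStar D P Q = TS D P Q := by
  rw [tensStar, TS, bilin_apply]

/-- `starP` as a bilinear map. -/
noncomputable def SP : QW Z →ₗ[ℚ] QW Z →ₗ[ℚ] QW Z := bilin (star D)

lemma starP_eq (p q : QW Z) : starP D p q = SP D p q := by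
  rw [starP, SP, bilin_apply]

/-- embedding `q ↦ 1 ⊗ q`. -/
noncomputable def iota2 : ((List Z) →₀ ℚ) →ₗ[ℚ] ((List Z × List Z) →₀ ℚ) :=
  Finsupp.lmapDomain ℚ ℚ fun v => (([] : List Z), v)

/-- `a ⊗ 1` acting on the left tensor factor. -/
noncomputable def preT (a : Z) :
    ((List Z × List Z) →₀ ℚ) →ₗ[ℚ] ((List Z × List Z) →₀ ℚ) :=
  Finsupp.lmapDomain ℚ ℚ fun xy => (a :: xy.1, xy.2)

/-- `L_c ⊗ id` on the tensor square. -/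
noncomputable def LTm (c : Z →₀ ℚ) :
    ((List Z × List Z) →₀ ℚ) →ₗ[ℚ] ((List Z × List Z) →₀ ℚ) :=
  Finsupp.lsum ℚ fun xy => LinearMap.toSpanSingleton ℚ _
    (Finsupp.mapDomain (fun w => (w, xy.2)) (Lw D c xy.1))

/-! ### star equation lemmas -/

lemma star_nil_left (v : List Z) : star D [] v = Finsupp.single v 1 := by
  rw [_root_.star]

lemma star_cons_nil (a : Z) (u : List Z) :
    star D (a :: u) [] = Finsupp.single (a :: u) 1 := by
  rw [_root_.star] <;> simp

lemma star_nil_right (u : List Z) : star D u [] = Finsupp.single u 1 := by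
  cases u with
  | nil => exact star_nil_left D []
  | cons a u => exact star_cons_nil D a u

lemma star_cons_cons (a b : Z) (u v : List Z) :
    star D (a :: u) (b :: v) =
      pre a (star D u (b :: v)) + pre b (star D (a :: u) v)
        - Lmap D (D (Finsupp.single a 1) (Finsupp.single b 1)) (star D u v) := by
  rw [_root_.star]

end Aux

section Aux2

variable {Z : Type*} (D : (Z →₀ ℚ) →ₗ[ℚ] (Z →₀ ℚ) →ₗ[ℚ] (Z →₀ ℚ))

lemma preL_single (a : Z) (u : List Z) (r : ℚ) :
    preL (Z := Z) a (Finsupp.single u r) = Finsupp.single (a :: u) r := by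
  simp [preL, Finsupp.mapDomain_single]

lemma preT_single (a : Z) (x y : List Z) (r : ℚ) :
    preT (Z := Z) a (Finsupp.single (x, y) r) = Finsupp.single (a :: x, y) r := by
  simp [preT, Finsupp.mapDomain_single]

lemma iota2_single (v : List Z) (r : ℚ) :
    iota2 (Z := Z) (Finsupp.single v r) = Finsupp.single (([] : List Z), v) r := by
  simp [iota2, Finsupp.mapDomain_single]

lemma deconL_single (w : List Z) (r : ℚ) :
    deconL (Finsupp.single w r) = r • deconW w := by
  simp [deconL, Finsupp.lsum_single, LinearMap.toSpanSingleton_apply]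

lemma LmapL_single (c : Z →₀ ℚ) (w : List Z) (r : ℚ) :
    LmapL D c (Finsupp.single w r) = r • Lw D c w := by
  simp [LmapL, Finsupp.lsum_single, LinearMap.toSpanSingleton_apply]

lemma LTm_single (c : Z →₀ ℚ) (x y : List Z) (r : ℚ) :
    LTm D c (Finsupp.single (x, y) r)
      = r • Finsupp.mapDomain (fun w => (w, y)) (Lw D c x) := by
  simp [LTm, Finsupp.lsum_single, LinearMap.toSpanSingleton_apply]

lemma tensB_single_single (u v : List Z) (r s : ℚ) :
    tensB (Finsupp.single u r) (Finsupp.single v s) = Finsupp.single (u, v) (r * s) := by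
  rw [tensB, bilin_single_single, Finsupp.smul_single', mul_one]

lemma TS_single_single (x y : List Z × List Z) (r s : ℚ) :
    TS D (Finsupp.single x r) (Finsupp.single y s)
      = (r * s) • tensB (star D x.1 y.1) (star D x.2 y.2) := by
  rw [TS, bilin_single_single, tens_eq]

lemma SP_single_single (u v : List Z) (r s : ℚ) :
    SP D (Finsupp.single u r) (Finsupp.single v s) = (r * s) • star D u v := by
  rw [SP, bilin_single_single]

lemma deconW_nil : deconW ([] : List Z) = Finsupp.single (([] : List Z), ([] : List Z)) 1 := by
  simp [deconW]

lemma deconW_cons (a : Z) (w : List Z) :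
    deconW (a :: w) = Finsupp.single (([] : List Z), a :: w) 1 + preT a (deconW w) := by
  rw [deconW, show (a :: w).length + 1 = (w.length + 1) + 1 from rfl, Finset.sum_range_succ']
  rw [add_comm]
  congr 1
  · rw [deconW, map_sum]
    refine Finset.sum_congr rfl fun k _ => ?_
    simp [preT_single]

lemma preT_tensB (a : Z) (p q : QW Z) :
    preT a (tensB p q) = tensB (preL a p) q := by
  induction p using Finsupp.induction_linear with
  | zero => simp
  | add p1 p2 h1 h2 => simp [map_add, LinearMap.add_apply, h1, h2]
  | single u r =>
    induction q using Finsupp.induction_linear with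
    | zero => simp
    | add q1 q2 h1 h2 => simp [map_add, h1, h2]
    | single v s => rw [tensB_single_single, preT_single, preL_single, tensB_single_single]

lemma tensB_single_right (p : QW Z) (v : List Z) (s : ℚ) :
    tensB p (Finsupp.single v s) = s • Finsupp.mapDomain (fun w => (w, v)) p := by
  induction p using Finsupp.induction_linear with
  | zero => simp
  | add p1 p2 h1 h2 => simp [map_add, LinearMap.add_apply, h1, h2, smul_add, Finsupp.mapDomain_add]
  | single u r =>
    rw [tensB_single_single, Finsupp.mapDomain_single, Finsupp.smul_single', mul_comm]

lemma LTm_tensB (c : Z →₀ ℚ) (p q : QW Z) :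
    LTm D c (tensB p q) = tensB (LmapL D c p) q := by
  induction p using Finsupp.induction_linear with
  | zero => simp
  | add p1 p2 h1 h2 => simp [map_add, LinearMap.add_apply, h1, h2]
  | single u r =>
    induction q using Finsupp.induction_linear with
    | zero => simp
    | add q1 q2 h1 h2 => simp [map_add, h1, h2]
    | single v s =>
      rw [tensB_single_single, LTm_single, LmapL_single, map_smul, LinearMap.smul_apply,
        tensB_single_right, smul_smul]

lemma iota2_tensB (q : QW Z) :
    tensB (Finsupp.single ([] : List Z) 1) q = iota2 q := by
  induction q using Finsupp.induction_linear with
  | zero => simp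
  | add q1 q2 h1 h2 => simp [map_add, h1, h2]
  | single v s => rw [tensB_single_single, iota2_single, one_mul]

end Aux2

section Aux3

variable {Z : Type*} (D : (Z →₀ ℚ) →ₗ[ℚ] (Z →₀ ℚ) →ₗ[ℚ] (Z →₀ ℚ))

lemma TS_nilnil_left (Q : (List Z × List Z) →₀ ℚ) :
    TS D (Finsupp.single (([] : List Z), ([] : List Z)) 1) Q = Q := by
  induction Q using Finsupp.induction_linear with
  | zero => simp
  | add q1 q2 h1 h2 => simp [map_add, h1, h2]
  | single y s =>
    obtain ⟨y1, y2⟩ := y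
    rw [TS_single_single, star_nil_left, star_nil_left, tensB_single_single, one_mul,
      mul_one, Finsupp.smul_single', mul_one]

lemma TS_nilnil_right (Q : (List Z × List Z) →₀ ℚ) :
    TS D Q (Finsupp.single (([] : List Z), ([] : List Z)) 1) = Q := by
  induction Q using Finsupp.induction_linear with
  | zero => simp
  | add q1 q2 h1 h2 => simp [map_add, LinearMap.add_apply, h1, h2]
  | single y s =>
    obtain ⟨y1, y2⟩ := y
    rw [TS_single_single, star_nil_right, star_nil_right, tensB_single_single, mul_one,
      mul_one, Finsupp.smul_single', mul_one]

lemma K1a (a : Z) (B : List Z) (P : (List Z × List Z) →₀ ℚ) :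
    preT a (TS D P (Finsupp.single (([] : List Z), B) 1))
      = TS D (preT a P) (Finsupp.single (([] : List Z), B) 1) := by
  induction P using Finsupp.induction_linear with
  | zero => simp
  | add p1 p2 h1 h2 => simp [map_add, LinearMap.add_apply, h1, h2]
  | single x r =>
    obtain ⟨x1, x2⟩ := x
    rw [TS_single_single, preT_single, TS_single_single]
    simp only [star_nil_right]
    rw [map_smul, preT_tensB, preL_single]

lemma K3 (b : Z) (A : List Z) (Q : (List Z × List Z) →₀ ℚ) :
    TS D (Finsupp.single (([] : List Z), A) 1) (preT b Q)
      = preT b (TS D (Finsupp.single (([] : List Z), A) 1) Q) := by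
  induction Q using Finsupp.induction_linear with
  | zero => simp
  | add q1 q2 h1 h2 => simp [map_add, h1, h2]
  | single y s =>
    obtain ⟨y1, y2⟩ := y
    rw [preT_single, TS_single_single, TS_single_single]
    simp only [star_nil_left]
    rw [map_smul, preT_tensB, preL_single]

lemma K2 (a b : Z) (P Q : (List Z × List Z) →₀ ℚ) :
    TS D (preT a P) (preT b Q)
      = preT a (TS D P (preT b Q)) + preT b (TS D (preT a P) Q)
        - LTm D (D (Finsupp.single a 1) (Finsupp.single b 1)) (TS D P Q) := by
  induction P using Finsupp.induction_linear with
  | zero => simp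
  | add p1 p2 h1 h2 =>
    simp only [map_add, LinearMap.add_apply, h1, h2]; abel
  | single x r =>
    induction Q using Finsupp.induction_linear with
    | zero => simp
    | add q1 q2 h1 h2 =>
      simp only [map_add, LinearMap.add_apply, h1, h2]; abel
    | single y s =>
      obtain ⟨x1, x2⟩ := x
      obtain ⟨y1, y2⟩ := y
      rw [preT_single, preT_single, TS_single_single, TS_single_single, TS_single_single,
        TS_single_single]
      simp only []
      rw [star_cons_cons]
      rw [pre_eq, pre_eq, Lmap_eq, map_sub, map_add, LinearMap.sub_apply, LinearMap.add_apply,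
        map_smul, map_smul, map_smul, preT_tensB, preT_tensB, LTm_tensB]
      rw [smul_sub, smul_add]

end Aux3

section Aux4

variable {Z : Type*} (D : (Z →₀ ℚ) →ₗ[ℚ] (Z →₀ ℚ) →ₗ[ℚ] (Z →₀ ℚ))

lemma decon_pre (a : Z) (p : QW Z) :
    deconL (preL a p) = iota2 (preL a p) + preT a (deconL p) := by
  induction p using Finsupp.induction_linear with
  | zero => simp
  | add p1 p2 h1 h2 => simp only [map_add, h1, h2]; abel
  | single w r =>
    rw [preL_single, deconL_single, deconW_cons, deconL_single, iota2_single, map_smul,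
      smul_add, Finsupp.smul_single', mul_one]

lemma LTm_preT (c : Z →₀ ℚ) (x : Z) (P : (List Z × List Z) →₀ ℚ) :
    LTm D c (preT x P) = (D c (Finsupp.single x 1)).sum fun b r => r • preT b P := by
  induction P using Finsupp.induction_linear with
  | zero => simp
  | add p1 p2 h1 h2 =>
    simp only [map_add, h1, h2, smul_add]
    rw [Finsupp.sum_add]
  | single y s =>
    obtain ⟨y1, y2⟩ := y
    rw [preT_single, LTm_single]
    show s • (Finsupp.lmapDomain ℚ ℚ fun w => (w, y2))
      ((D c (Finsupp.single x 1)).sum fun b r => Finsupp.single (b :: y1) r) = _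
    rw [map_finsuppSum, Finsupp.smul_sum]
    refine Finsupp.sum_congr fun b _ => ?_
    show s • Finsupp.mapDomain (fun w => (w, y2)) (Finsupp.single (b :: y1) _) = _
    rw [Finsupp.mapDomain_single, preT_single, Finsupp.smul_single, Finsupp.smul_single,
      smul_eq_mul, smul_eq_mul, mul_comm]

lemma decon_Lw (c : Z →₀ ℚ) (w : List Z) :
    deconL (Lw D c w) = iota2 (Lw D c w) + LTm D c (deconW w) := by
  cases w with
  | nil =>
    show deconL 0 = iota2 0 + LTm D c (deconW ([] : List Z))
    rw [deconW_nil, map_zero, map_zero, LTm_single, zero_add]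
    show (0 : _) = (1 : ℚ) • Finsupp.mapDomain _ (0 : QW Z)
    simp
  | cons x t =>
    show deconL ((D c (Finsupp.single x 1)).sum fun b r => Finsupp.single (b :: t) r)
      = iota2 ((D c (Finsupp.single x 1)).sum fun b r => Finsupp.single (b :: t) r)
        + LTm D c (deconW (x :: t))
    rw [deconW_cons, map_add, LTm_single, LTm_preT]
    show _ = _ + ((1 : ℚ) • Finsupp.mapDomain (fun w => (w, x :: t)) (0 : QW Z) + _)
    rw [map_finsuppSum, map_finsuppSum]
    simp only [Finsupp.mapDomain_zero, smul_zero, zero_add]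
    rw [← Finsupp.sum_add]
    refine Finsupp.sum_congr fun b _ => ?_
    rw [deconL_single, iota2_single, deconW_cons, smul_add, Finsupp.smul_single', mul_one]

lemma decon_Lmap (c : Z →₀ ℚ) (p : QW Z) :
    deconL (LmapL D c p) = iota2 (LmapL D c p) + LTm D c (deconL p) := by
  induction p using Finsupp.induction_linear with
  | zero => simp
  | add p1 p2 h1 h2 => simp only [map_add, h1, h2]; abel
  | single w r =>
    rw [LmapL_single, deconL_single, map_smul, map_smul, map_smul, decon_Lw, smul_add]

lemma TS_sAsB (A B : List Z) :
    TS D (Finsupp.single (([] : List Z), A) 1) (Finsupp.single (([] : List Z), B) 1)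
      = iota2 (star D A B) := by
  rw [TS_single_single]
  simp only [star_nil_left]
  rw [one_mul, one_smul, iota2_tensB]

lemma key : ∀ u v : List Z, deconL (star D u v) = TS D (deconW u) (deconW v)
  | [], v => by
    rw [star_nil_left, deconL_single, one_smul, deconW_nil, TS_nilnil_left]
  | a :: u, [] => by
    rw [star_cons_nil, deconL_single, one_smul, deconW_nil, TS_nilnil_right]
  | a :: u, b :: v => by
    have ih1 := key u (b :: v)
    have ih2 := key (a :: u) v
    have ih3 := key u v
    rw [star_cons_cons]
    have hiota : iota2 (pre a (star D u (b :: v)) + pre b (star D (a :: u) v)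
        - Lmap D (D (Finsupp.single a 1) (Finsupp.single b 1)) (star D u v))
        = iota2 (star D (a :: u) (b :: v)) := by
      rw [star_cons_cons]
    rw [map_sub, map_add, pre_eq, pre_eq, Lmap_eq, decon_pre, decon_pre, decon_Lmap]
    rw [ih1, ih2, ih3]
    rw [deconW_cons a u, deconW_cons b v]
    have hiota' : iota2 (star D (a :: u) (b :: v))
        = iota2 (preL a (star D u (b :: v))) + iota2 (preL b (star D (a :: u) v))
          - iota2 (LmapL D (D (Finsupp.single a 1) (Finsupp.single b 1)) (star D u v)) := by
      rw [star_cons_cons, pre_eq, pre_eq, Lmap_eq, map_sub, map_add]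
    simp only [map_add, LinearMap.add_apply]
    rw [TS_sAsB, K3, K2, ← K1a, hiota']
    abel
  termination_by u v => u.length + v.length

end Aux4

theorem decon_is_star_hom {Z : Type*}
    (D : (Z →₀ ℚ) →ₗ[ℚ] (Z →₀ ℚ) →ₗ[ℚ] (Z →₀ ℚ))
    (hcomm : ∀ x y, D x y = D y x)
    (hassoc : ∀ x y z, D (D x y) z = D x (D y z)) :
    ∀ p q : QW Z, decon (starP D p q) = tensStar D (decon p) (decon q) := by
  intro p q
  rw [starP_eq, decon_eq, decon_eq, decon_eq, tensStar_eq]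
  induction p using Finsupp.induction_linear with
  | zero => simp
  | add p1 p2 h1 h2 => simp [map_add, LinearMap.add_apply, h1, h2]
  | single u r =>
    induction q using Finsupp.induction_linear with
    | zero => simp
    | add q1 q2 h1 h2 => simp [map_add, h1, h2]
    | single v s =>
      rw [SP_single_single, map_smul, key, deconL_single, deconL_single, map_smul,
        map_smul, LinearMap.smul_apply, smul_smul, mul_comm r s]
end

section
/- For every nonempty word z_{i₁}⋯z_{i_r} with r ≥ 2, the alternating sum ∑_{k=1}^{r-1} (−1)^{k+1} L_{z_{i_k} ◊ z_{i_{k+1}}}(z_{i_{k−1}}⋯z_{i₁} ⋆ z_{i_{k+2}}⋯z_{i_r}) vanishes in (ℚ⟨Z⟩, ⋆). -/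
/- STATEMENT 10: for every word z_{i₁}⋯z_{i_r} with r ≥ 2 (letters `i 0, …, i (r-1)`
in zero-based indexing), the alternating sum
∑_{k=1}^{r-1} (−1)^{k+1} L_{z_{i_k} ◊ z_{i_{k+1}}}(z_{i_{k−1}}⋯z_{i₁} ⋆ z_{i_{k+2}}⋯z_{i_r})
vanishes, where by convention the left factor is the empty word when k = 1 and the
right factor is empty when k = r−1. -/

section AuxLemmas

variable {Z : Type*} (D : (Z →₀ ℚ) →ₗ[ℚ] (Z →₀ ℚ) →ₗ[ℚ] (Z →₀ ℚ))

/-- prepend a "linear combination of letters" to a polynomial -/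
noncomputable def prec (b : Z →₀ ℚ) (p : QW Z) : QW Z :=
  b.sum fun x s => s • pre x p

lemma pre_zero (a : Z) : pre a (0 : QW Z) = 0 := Finsupp.mapDomain_zero

lemma pre_add (a : Z) (p q : QW Z) : pre a (p + q) = pre a p + pre a q :=
  Finsupp.mapDomain_add

lemma pre_smul (a : Z) (s : ℚ) (p : QW Z) : pre a (s • p) = s • pre a p :=
  Finsupp.mapDomain_smul s p

lemma pre_single (a : Z) (w : List Z) (r : ℚ) :
    pre a (Finsupp.single w r) = Finsupp.single (a :: w) r :=
  Finsupp.mapDomain_single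

lemma prec_zero_left (p : QW Z) : prec (0 : Z →₀ ℚ) p = 0 :=
  Finsupp.sum_zero_index

lemma prec_single_left (x : Z) (s : ℚ) (p : QW Z) :
    prec (Finsupp.single x s) p = s • pre x p :=
  Finsupp.sum_single_index (by simp)

lemma prec_add_left (b b' : Z →₀ ℚ) (p : QW Z) :
    prec (b + b') p = prec b p + prec b' p :=
  Finsupp.sum_add_index' (by simp) (fun _ s t => add_smul s t _)

lemma prec_smul_left (s : ℚ) (b : Z →₀ ℚ) (p : QW Z) :
    prec (s • b) p = s • prec b p := by
  unfold prec
  rw [Finsupp.sum_smul_index' (by simp), Finsupp.smul_sum]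
  simp [mul_smul]

lemma prec_zero_right (b : Z →₀ ℚ) : prec b (0 : QW Z) = 0 := by
  simp [prec, pre_zero]

lemma prec_add_right (b : Z →₀ ℚ) (p q : QW Z) :
    prec b (p + q) = prec b p + prec b q := by
  simp [prec, pre_add, smul_add, Finsupp.sum_add]

lemma prec_smul_right (b : Z →₀ ℚ) (s : ℚ) (p : QW Z) :
    prec b (s • p) = s • prec b p := by
  simp only [prec, pre_smul, Finsupp.smul_sum]
  exact Finsupp.sum_congr fun x _ => smul_comm _ _ _

lemma Lw_nil (c : Z →₀ ℚ) : Lw D c [] = 0 := rfl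

lemma Lw_cons (c : Z →₀ ℚ) (x : Z) (t : List Z) :
    Lw D c (x :: t) = prec (D c (Finsupp.single x 1)) (Finsupp.single t 1) := by
  unfold Lw prec
  exact Finsupp.sum_congr fun b _ => by rw [pre_single, Finsupp.smul_single, smul_eq_mul, mul_one]

lemma Lmap_zero (c : Z →₀ ℚ) : Lmap D c (0 : QW Z) = 0 :=
  Finsupp.sum_zero_index

lemma Lmap_add (c : Z →₀ ℚ) (p q : QW Z) :
    Lmap D c (p + q) = Lmap D c p + Lmap D c q :=
  Finsupp.sum_add_index' (by simp) (fun _ s t => add_smul s t _)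

lemma Lmap_smul (c : Z →₀ ℚ) (s : ℚ) (p : QW Z) :
    Lmap D c (s • p) = s • Lmap D c p := by
  unfold Lmap
  rw [Finsupp.sum_smul_index' (by simp), Finsupp.smul_sum]
  simp [mul_smul]

lemma Lmap_sub (c : Z →₀ ℚ) (p q : QW Z) :
    Lmap D c (p - q) = Lmap D c p - Lmap D c q :=
  Finsupp.sum_sub_index (fun _ s t => sub_smul s t _)

lemma Lmap_single (c : Z →₀ ℚ) (w : List Z) (r : ℚ) :
    Lmap D c (Finsupp.single w r) = r • Lw D c w :=
  Finsupp.sum_single_index (by simp)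

lemma Lmap_pre (c : Z →₀ ℚ) (x : Z) (p : QW Z) :
    Lmap D c (pre x p) = prec (D c (Finsupp.single x 1)) p := by
  induction p using Finsupp.induction with
  | zero => rw [pre_zero, Lmap_zero, prec_zero_right]
  | single_add w r p _ _ ih =>
      rw [pre_add, Lmap_add, ih, prec_add_right, pre_single, Lmap_single, Lw_cons]
      congr 1
      have : (Finsupp.single w r : QW Z) = r • Finsupp.single w 1 := by
        rw [Finsupp.smul_single, smul_eq_mul, mul_one]
      rw [this, prec_smul_right]

lemma Lmap_prec (c b : Z →₀ ℚ) (p : QW Z) :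
    Lmap D c (prec b p) = prec (D c b) p := by
  induction b using Finsupp.induction with
  | zero => rw [prec_zero_left, Lmap_zero, map_zero, prec_zero_left]
  | single_add x s b _ _ ih =>
      rw [prec_add_left, Lmap_add, ih, prec_single_left, Lmap_smul, Lmap_pre, map_add,
        prec_add_left]
      congr 1
      have : (Finsupp.single x s : Z →₀ ℚ) = s • Finsupp.single x 1 := by
        rw [Finsupp.smul_single, smul_eq_mul, mul_one]
      rw [this, map_smul, prec_smul_left]

lemma Lmap_Lmap (hassoc : ∀ x y z, D (D x y) z = D x (D y z)) (c c' : Z →₀ ℚ) (p : QW Z) :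
    Lmap D c (Lmap D c' p) = Lmap D (D c c') p := by
  induction p using Finsupp.induction with
  | zero => rw [Lmap_zero, Lmap_zero, Lmap_zero]
  | single_add w r p _ _ ih =>
      rw [Lmap_add, Lmap_add, ih, Lmap_add]
      congr 1
      rw [Lmap_single, Lmap_smul, Lmap_single]
      congr 1
      cases w with
      | nil => rw [Lw_nil, Lw_nil, Lmap_zero]
      | cons x t => rw [Lw_cons, Lmap_prec, Lw_cons, hassoc]

end AuxLemmas

section Main

variable {Z : Type*} (D : (Z →₀ ℚ) →ₗ[ℚ] (Z →₀ ℚ) →ₗ[ℚ] (Z →₀ ℚ))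

/-- ◊-product of the letters `i k, i (k+1), …, i (k+w)`. -/
noncomputable def dd (i : ℕ → Z) : ℕ → ℕ → (Z →₀ ℚ)
  | k, 0 => Finsupp.single (i k) 1
  | k, w + 1 => D (dd i k w) (Finsupp.single (i (k + w + 1)) 1)

lemma dd_succ (i : ℕ → Z) (k w : ℕ) :
    dd D i k (w + 1) = D (dd D i k w) (Finsupp.single (i (k + w + 1)) 1) := rfl

lemma dd_cons (hassoc : ∀ x y z, D (D x y) z = D x (D y z)) (i : ℕ → Z) :
    ∀ w k, D (Finsupp.single (i k) 1) (dd D i (k + 1) w) = dd D i k (w + 1)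
  | 0, k => by simp [dd]
  | w + 1, k => by
      have e : k + 1 + w + 1 = k + (w + 1) + 1 := by omega
      calc D (Finsupp.single (i k) 1) (dd D i (k + 1) (w + 1))
          = D (Finsupp.single (i k) 1)
              (D (dd D i (k + 1) w) (Finsupp.single (i (k + 1 + w + 1)) 1)) := rfl
        _ = D (D (Finsupp.single (i k) 1) (dd D i (k + 1) w))
              (Finsupp.single (i (k + 1 + w + 1)) 1) := (hassoc _ _ _).symm
        _ = D (dd D i k (w + 1)) (Finsupp.single (i (k + (w + 1) + 1)) 1) := by
              rw [dd_cons hassoc i w k, e]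
        _ = dd D i k (w + 1 + 1) := rfl

lemma dd_left (hcomm : ∀ x y, D x y = D y x) (hassoc : ∀ x y z, D (D x y) z = D x (D y z))
    (i : ℕ → Z) (w k : ℕ) :
    D (dd D i (k + 1) w) (Finsupp.single (i k) 1) = dd D i k (w + 1) := by
  rw [hcomm, dd_cons D hassoc]

lemma dd_two (hcomm : ∀ x y, D x y = D y x) (hassoc : ∀ x y z, D (D x y) z = D x (D y z))
    (i : ℕ → Z) (w k : ℕ) :
    D (dd D i (k + 1) w) (D (Finsupp.single (i k) 1) (Finsupp.single (i (k + w + 2)) 1)) =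
      dd D i k (w + 2) := by
  rw [← hassoc, dd_left D hcomm hassoc]
  have e : k + w + 2 = k + (w + 1) + 1 := by omega
  rw [e]
  exact (dd_succ D i k (w + 1)).symm

lemma Lmap_star_cons (hassoc : ∀ x y z, D (D x y) z = D x (D y z))
    (c : Z →₀ ℚ) (a b : Z) (u v : List Z) :
    Lmap D c (star D (a :: u) (b :: v)) =
      prec (D c (Finsupp.single a 1)) (star D u (b :: v))
        + prec (D c (Finsupp.single b 1)) (star D (a :: u) v)
        - Lmap D (D c (D (Finsupp.single a 1) (Finsupp.single b 1))) (star D u v) := by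
  rw [star_cons_cons, Lmap_sub, Lmap_add, Lmap_pre, Lmap_pre, Lmap_Lmap D hassoc]

/-- The `Q`-terms of the telescoping. -/
noncomputable def QQ (i : ℕ → Z) (w m j : ℕ) : QW Z :=
  prec (dd D i j (w + 1))
    (star D (((List.range j).map i).reverse) ((List.range' (j + w + 2) (m - j)).map i))

/-- The `R`-terms (the next window sum). -/
noncomputable def RR (i : ℕ → Z) (w m' j : ℕ) : QW Z :=
  Lmap D (dd D i j (w + 2))
    (star D (((List.range j).map i).reverse) ((List.range' (j + (w + 2) + 1) (m' - j)).map i))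

lemma rev_range_succ (i : ℕ → Z) (k : ℕ) :
    ((List.range (k + 1)).map i).reverse = i k :: ((List.range k).map i).reverse := by
  rw [List.range_succ]
  simp

lemma main_lemma (hcomm : ∀ x y, D x y = D y x) (hassoc : ∀ x y z, D (D x y) z = D x (D y z))
    (i : ℕ → Z) :
    ∀ n w : ℕ,
      ∑ k ∈ Finset.range (n + 1),
        ((-1 : ℚ) ^ k) •
          Lmap D (dd D i k w)
            (star D (((List.range k).map i).reverse)
              ((List.range' (k + w + 1) (n - k)).map i)) = 0 := by
  intro n
  induction n using Nat.strong_induction_on with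
  | _ n ih =>
    intro w
    match n with
    | 0 =>
        simp [star_nil_left, Lmap_single, Lw_nil]
    | m + 1 =>
        rw [Finset.sum_range_succ', Finset.sum_range_succ]
        have h0 : ((-1 : ℚ) ^ (0 : ℕ)) •
            Lmap D (dd D i 0 w)
              (star D (((List.range 0).map i).reverse)
                ((List.range' (0 + w + 1) (m + 1 - 0)).map i)) = QQ D i w m 0 := by
          rw [pow_zero, one_smul, QQ]
          simp only [List.range_zero, List.map_nil, List.reverse_nil, Nat.sub_zero, Nat.zero_add]
          rw [List.range'_succ, List.map_cons, star_nil_left, star_nil_left,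
            Lmap_single, one_smul, Lw_cons, dd_succ]
          have ea : 0 + w + 1 = w + 1 := by omega
          have eb : w + 1 + 1 = w + 2 := by omega
          rw [ea, eb]
        have hlast : ((-1 : ℚ) ^ (m + 1)) •
            Lmap D (dd D i (m + 1) w)
              (star D (((List.range (m + 1)).map i).reverse)
                ((List.range' (m + 1 + w + 1) (m + 1 - (m + 1))).map i)) =
            ((-1 : ℚ) ^ (m + 1)) • QQ D i w m m := by
          have e1 : m + 1 - (m + 1) = 0 := by omega
          have e2 : m - m = 0 := by omega
          rw [e1, QQ, e2, List.range'_zero, List.range'_zero, List.map_nil,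
            rev_range_succ, star_nil_right, star_nil_right, Lmap_single, one_smul, Lw_cons,
            dd_left D hcomm hassoc]
        have hmid : ∀ k ∈ Finset.range m,
            ((-1 : ℚ) ^ (k + 1)) •
              Lmap D (dd D i (k + 1) w)
                (star D (((List.range (k + 1)).map i).reverse)
                  ((List.range' (k + 1 + w + 1) (m + 1 - (k + 1))).map i)) =
            (((-1 : ℚ) ^ (k + 1)) • QQ D i w m k - ((-1 : ℚ) ^ (k + 1 + 1)) • QQ D i w m (k + 1))
              + ((-1 : ℚ) ^ k) • RR D i w (m - 1) k := by
          intro k hk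
          have hkm : k < m := Finset.mem_range.mp hk
          have e1 : m + 1 - (k + 1) = (m - (k + 1)) + 1 := by omega
          have e2 : k + 1 + w + 1 = k + w + 2 := by omega
          rw [e1, List.range'_succ, List.map_cons, rev_range_succ, Lmap_star_cons D hassoc,
            dd_left D hcomm hassoc, e2, dd_two D hcomm hassoc]
          have hQk : prec (dd D i k (w + 1))
              (star D (((List.range k).map i).reverse)
                (i (k + w + 2) :: (List.range' (k + w + 2 + 1) (m - (k + 1))).map i)) =
              QQ D i w m k := by
            rw [QQ]
            have e3 : m - k = (m - (k + 1)) + 1 := by omega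
            rw [e3, List.range'_succ, List.map_cons]
          have hQk1 : prec (D (dd D i (k + 1) w) (Finsupp.single (i (k + w + 2)) 1))
              (star D (i k :: ((List.range k).map i).reverse)
                ((List.range' (k + w + 2 + 1) (m - (k + 1))).map i)) =
              QQ D i w m (k + 1) := by
            rw [QQ, ← rev_range_succ]
            have e4 : dd D i (k + 1) (w + 1)
                = D (dd D i (k + 1) w) (Finsupp.single (i (k + w + 2)) 1) := by
              have ea : k + 1 + w + 1 = k + w + 2 := by omega
              rw [dd_succ, ea]
            have eb : k + 1 + w + 2 = k + w + 2 + 1 := by omega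
            rw [e4, eb]
          have hRk : Lmap D (dd D i k (w + 2))
              (star D (((List.range k).map i).reverse)
                ((List.range' (k + w + 2 + 1) (m - (k + 1))).map i)) =
              RR D i w (m - 1) k := by
            rw [RR]
            have ec : k + (w + 2) + 1 = k + w + 2 + 1 := by omega
            have ed : m - 1 - k = m - (k + 1) := by omega
            rw [ec, ed]
          rw [hQk, hQk1, hRk]
          have key : ∀ A B C : QW Z,
              ((-1 : ℚ) ^ (k + 1)) • (A + B - C) =
                (((-1 : ℚ) ^ (k + 1)) • A - ((-1 : ℚ) ^ (k + 1 + 1)) • B)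
                  + ((-1 : ℚ) ^ k) • C := by
            intro A B C
            rw [pow_succ ((-1 : ℚ)) (k + 1), pow_succ ((-1 : ℚ)) k]
            module
          exact key _ _ _
        have hR : ∑ k ∈ Finset.range m, ((-1 : ℚ) ^ k) • RR D i w (m - 1) k = 0 := by
          rcases Nat.eq_zero_or_pos m with hm | hm
          · subst hm; simp
          · obtain ⟨m', rfl⟩ : ∃ m', m = m' + 1 := ⟨m - 1, by omega⟩
            rw [show m' + 1 - 1 = m' from rfl]
            simp only [RR]
            exact ih m' (by omega) (w + 2)
        rw [Finset.sum_congr rfl hmid, h0, hlast, Finset.sum_add_distrib,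
          Finset.sum_range_sub' (fun j => ((-1 : ℚ) ^ (j + 1)) • QQ D i w m j) m, hR]
        have e0 : ((-1 : ℚ)) ^ (0 + 1) • QQ D i w m 0 = - QQ D i w m 0 := by norm_num
        simp only [e0]
        abel

end Main

theorem alternating_L_sum_vanishes {Z : Type*}
    (D : (Z →₀ ℚ) →ₗ[ℚ] (Z →₀ ℚ) →ₗ[ℚ] (Z →₀ ℚ))
    (hcomm : ∀ x y, D x y = D y x)
    (hassoc : ∀ x y z, D (D x y) z = D x (D y z))
    (r : ℕ) (hr : 2 ≤ r) (i : ℕ → Z) :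
    ∑ k ∈ Finset.Icc 1 (r - 1),
      ((-1 : ℚ) ^ (k + 1)) •
        Lmap D (D (Finsupp.single (i (k - 1)) 1) (Finsupp.single (i k) 1))
          (star D (((List.range (k - 1)).map i).reverse)
            ((List.range' (k + 1) (r - 1 - k)).map i)) = 0 := by
  have H := main_lemma D hcomm hassoc i (r - 2) 1
  rw [← Finset.Ico_add_one_right_eq_Icc, show r - 1 + 1 = r from by omega, Finset.sum_Ico_eq_sum_range]
  have hterm : ∀ k ∈ Finset.range (r - 2 + 1),
      ((-1 : ℚ) ^ (1 + k + 1)) •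
        Lmap D (D (Finsupp.single (i (1 + k - 1)) 1) (Finsupp.single (i (1 + k)) 1))
          (star D (((List.range (1 + k - 1)).map i).reverse)
            ((List.range' (1 + k + 1) (r - 1 - (1 + k))).map i)) =
      ((-1 : ℚ) ^ k) •
        Lmap D (dd D i k 1)
          (star D (((List.range k).map i).reverse)
            ((List.range' (k + 1 + 1) (r - 2 - k)).map i)) := by
    intro k hk
    have e1 : 1 + k - 1 = k := by omega
    have e2 : 1 + k + 1 = k + 1 + 1 := by omega
    have e3 : r - 1 - (1 + k) = r - 2 - k := by omega
    have e4 : ((-1 : ℚ)) ^ (k + 1 + 1) = (-1 : ℚ) ^ k := by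
      rw [pow_succ, pow_succ]; ring
    have e5 : dd D i k 1 = D (Finsupp.single (i k) 1) (Finsupp.single (i (k + 1)) 1) := rfl
    have e6 : 1 + k = k + 1 := by omega
    rw [e1, e2, e3, e4, e6, ← e5]
  rw [show Finset.range (r - 1) = Finset.range (r - 2 + 1) from by rw [show r - 1 = r - 2 + 1 from by omega],
    Finset.sum_congr rfl hterm]
  exact H
end
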